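/- arXiv:2503.06115 — 2 statements merged into one kernel-verified Lean document; each statement's English description precedes it below -/
import Mathlib

section
/- For all real y and a > 0, the function y ↦ e^{-y/2}·(cosh y)^{-(a+1/2)} satisfies ∫_ℝ e^{-y/2}·(cosh y)^{-(a+1/2)} dy = √(2π)·Γ(a)/Γ(a+1/2); in particular, p(y) := (Γ(a+1/2)/(√(2π)·Γ(a)))·e^{-y/2}·(cosh y)^{-(a+1/2)} is a probability density on ℝ. -/
open Real MeasureTheory

lemma eq_of_log_eq {A B : ℝ} (hA : 0 < A) (hB : 0 < B) (h : Real.log A = Real.log B) : A = B := by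
  rw [← Real.exp_log hA, ← Real.exp_log hB, h]

lemma pt1 (a u : ℝ) (hu : 0 < u) :
    u ^ (-(1:ℝ)/2) * ((u + u⁻¹)/2) ^ (-(a+1/2))
      = 2 ^ (a+1/2) * (u ^ a * (1+u^2) ^ (-(a+1/2))) := by
  have hP : (0:ℝ) < 1 + u^2 := by positivity
  have hb : (u + u⁻¹)/2 = (1+u^2) / (2*u) := by field_simp; ring
  rw [hb]
  apply eq_of_log_eq (by positivity) (by positivity)
  rw [Real.log_mul (by positivity) (by positivity),
      Real.log_mul (by positivity) (by positivity),
      Real.log_mul (by positivity) (by positivity),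
      Real.log_rpow hu, Real.log_rpow (by positivity), Real.log_rpow (by norm_num),
      Real.log_rpow hu, Real.log_rpow hP,
      Real.log_div (by positivity) (by positivity),
      Real.log_mul (by norm_num) (by positivity)]
  ring

lemma pt2 (a u : ℝ) (hu : 0 < u) :
    |2*u/(1+u^2)^2| * ((u^2/(1+u^2)) ^ ((a+1)/2 - 1) * (1 - u^2/(1+u^2)) ^ (a/2 - 1))
      = 2 * (u ^ a * (1+u^2) ^ (-(a+1/2))) := by
  have hP : (0:ℝ) < 1 + u^2 := by positivity
  have h1 : 1 - u^2/(1+u^2) = (1+u^2)⁻¹ := by field_simp; ring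
  rw [h1, abs_of_pos (by positivity)]
  apply eq_of_log_eq (by positivity) (by positivity)
  rw [Real.log_mul (by positivity) (by positivity)]
  rw [Real.log_mul (by positivity) (by positivity)]
  rw [Real.log_mul (by positivity) (by positivity)]
  rw [Real.log_mul (by positivity) (by positivity)]
  rw [Real.log_rpow (by positivity), Real.log_rpow (by positivity), Real.log_rpow hu,
      Real.log_rpow hP]
  rw [Real.log_div (by positivity) (by positivity), Real.log_div (by positivity) (by positivity)]
  rw [Real.log_mul (by norm_num) hu.ne', Real.log_inv, Real.log_pow, Real.log_pow]
  push_cast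
  ring

lemma real_beta {u v : ℝ} (hu : 0 < u) (hv : 0 < v) :
    ∫ x in (0:ℝ)..1, x ^ (u - 1) * (1 - x) ^ (v - 1)
      = Real.Gamma u * Real.Gamma v / Real.Gamma (u + v) := by
  have hcb : (Complex.betaIntegral u v)
      = ((∫ x in (0:ℝ)..1, x ^ (u - 1) * (1 - x) ^ (v - 1) : ℝ) : ℂ) := by
    rw [Complex.betaIntegral, ← intervalIntegral.integral_ofReal]
    apply intervalIntegral.integral_congr
    intro x hx
    rw [Set.uIcc_of_le (by norm_num : (0:ℝ) ≤ 1)] at hx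
    obtain ⟨hx0, hx1⟩ := hx
    beta_reduce
    rw [show ((u:ℂ) - 1) = ((u - 1 : ℝ) : ℂ) by push_cast; ring,
      show ((v:ℂ) - 1) = ((v - 1 : ℝ) : ℂ) by push_cast; ring,
      ← Complex.ofReal_cpow hx0]
    rw [show (1 - (x:ℂ)) = ((1 - x : ℝ) : ℂ) by push_cast; ring,
      ← Complex.ofReal_cpow (by linarith : (0:ℝ) ≤ 1 - x)]
    push_cast
    ring
  have h := Complex.Gamma_mul_Gamma_eq_betaIntegral
    (s := (u:ℂ)) (t := (v:ℂ)) (by simpa using hu) (by simpa using hv)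
  rw [hcb, ← Complex.ofReal_add, Complex.Gamma_ofReal, Complex.Gamma_ofReal,
    Complex.Gamma_ofReal, ← Complex.ofReal_mul, ← Complex.ofReal_mul] at h
  have h' := Complex.ofReal_inj.mp h
  have hG : Real.Gamma (u + v) ≠ 0 := (Real.Gamma_pos_of_pos (by linarith)).ne'
  field_simp [h']
  linear_combination -h'

lemma step1 (a : ℝ) :
    ∫ u in Set.Ioi (0:ℝ), (u ^ (-(1:ℝ)/2) * ((u + u⁻¹)/2) ^ (-(a+1/2)))
      = ∫ y : ℝ, Real.exp (-y/2) * (Real.cosh y) ^ (-(a + 1/2)) := by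
  have himg : (fun y : ℝ => Real.exp (-y)) '' Set.univ = Set.Ioi 0 := by
    rw [Set.image_univ]
    ext x
    simp only [Set.mem_range, Set.mem_Ioi]
    constructor
    · rintro ⟨y, rfl⟩; exact Real.exp_pos _
    · intro hx; exact ⟨-Real.log x, by rw [neg_neg, Real.exp_log hx]⟩
  have hderiv : ∀ y ∈ Set.univ,
      HasDerivWithinAt (fun y : ℝ => Real.exp (-y)) (-Real.exp (-y)) Set.univ y := by
    intro y _
    have h : HasDerivAt (fun y : ℝ => Real.exp (-y)) (Real.exp (-y) * (-1)) y :=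
      (Real.hasDerivAt_exp (-y)).comp y (hasDerivAt_neg y)
    have h' : HasDerivAt (fun y : ℝ => Real.exp (-y)) (-Real.exp (-y)) y := by simpa using h
    exact h'.hasDerivWithinAt
  have hinj : Set.InjOn (fun y : ℝ => Real.exp (-y)) Set.univ :=
    (Real.exp_injective.comp neg_injective).injOn
  have key := integral_image_eq_integral_abs_deriv_smul MeasurableSet.univ hderiv hinj
    (fun u => u ^ (-(1:ℝ)/2) * ((u + u⁻¹)/2) ^ (-(a+1/2)))
  rw [himg] at key
  rw [key, MeasureTheory.Measure.restrict_univ]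
  apply MeasureTheory.integral_congr_ae
  filter_upwards with y
  have he : (0:ℝ) < Real.exp (-y) := Real.exp_pos _
  rw [abs_neg, abs_of_pos he, smul_eq_mul]
  have hc : (Real.exp (-y) + (Real.exp (-y))⁻¹)/2 = Real.cosh y := by
    rw [Real.exp_neg, inv_inv, Real.cosh_eq, Real.exp_neg]
    ring
  rw [hc]
  have h2 : Real.exp (-y) * (Real.exp (-y)) ^ (-(1:ℝ)/2) = Real.exp (-y/2) := by
    rw [← Real.exp_mul, ← Real.rpow_one (Real.exp (-y)), ← Real.exp_mul,
      ← Real.exp_add]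
    ring_nf
  rw [← mul_assoc, h2]

lemma step2 (a : ℝ) :
    ∫ t in Set.Ioo (0:ℝ) 1, (t ^ ((a+1)/2 - 1) * (1 - t) ^ (a/2 - 1))
      = 2 * ∫ u in Set.Ioi (0:ℝ), (u ^ a * (1+u^2) ^ (-(a+1/2))) := by
  have himg : (fun u : ℝ => u^2/(1+u^2)) '' (Set.Ioi 0) = Set.Ioo 0 1 := by
    ext t
    simp only [Set.mem_image, Set.mem_Ioi, Set.mem_Ioo]
    constructor
    · rintro ⟨u, hu, rfl⟩
      have hP : (0:ℝ) < 1 + u^2 := by positivity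
      constructor
      · positivity
      · rw [div_lt_one hP]; nlinarith
    · rintro ⟨ht0, ht1⟩
      have h1t : (0:ℝ) < 1 - t := by linarith
      refine ⟨Real.sqrt (t/(1-t)), Real.sqrt_pos.mpr (by positivity : (0:ℝ) < t/(1-t)), ?_⟩
      have hs : Real.sqrt (t/(1-t)) ^ 2 = t/(1-t) := Real.sq_sqrt (by positivity)
      rw [hs]
      field_simp
      ring
  have hderiv : ∀ u ∈ Set.Ioi (0:ℝ),
      HasDerivWithinAt (fun u : ℝ => u^2/(1+u^2)) (2*u/(1+u^2)^2) (Set.Ioi 0) u := by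
    intro u _
    have hP : (0:ℝ) < 1 + u^2 := by positivity
    have h1 : HasDerivAt (fun u : ℝ => u^2) (2*u) u := by
      simpa using hasDerivAt_pow 2 u
    have h2 : HasDerivAt (fun u : ℝ => 1 + u^2) (2*u) u := by
      exact h1.const_add 1
    have h := h1.div h2 hP.ne'
    convert h.hasDerivWithinAt using 1
    · rfl
    · rfl
    · rfl
    · ring
  have hinj : Set.InjOn (fun u : ℝ => u^2/(1+u^2)) (Set.Ioi 0) := by
    intro u hu v hv h
    simp only [Set.mem_Ioi] at hu hv
    have hPu : (0:ℝ) < 1 + u^2 := by positivity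
    have hPv : (0:ℝ) < 1 + v^2 := by positivity
    have h2 : u^2 = v^2 := by
      field_simp at h
      nlinarith [h]
    calc u = Real.sqrt (u^2) := (Real.sqrt_sq hu.le).symm
      _ = Real.sqrt (v^2) := by rw [h2]
      _ = v := Real.sqrt_sq hv.le
  have key := integral_image_eq_integral_abs_deriv_smul measurableSet_Ioi hderiv hinj
    (fun t => t ^ ((a+1)/2 - 1) * (1 - t) ^ (a/2 - 1))
  rw [himg] at key
  rw [key]
  rw [show (2:ℝ) * ∫ u in Set.Ioi (0:ℝ), (u ^ a * (1+u^2) ^ (-(a+1/2)))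
      = ∫ u in Set.Ioi (0:ℝ), 2 * (u ^ a * (1+u^2) ^ (-(a+1/2)))
    from (MeasureTheory.integral_const_mul 2 _).symm]
  apply MeasureTheory.setIntegral_congr_fun measurableSet_Ioi
  intro u hu
  simp only [Set.mem_Ioi] at hu
  exact pt2 a u hu

theorem stmt_8 (a : ℝ) (ha : 0 < a) :
    (∫ y : ℝ, Real.exp (-y/2) * (Real.cosh y) ^ (-(a + 1/2))
      = Real.sqrt (2 * Real.pi) * Real.Gamma a / Real.Gamma (a + 1/2)) ∧
    (∫ y : ℝ, (Real.Gamma (a + 1/2) / (Real.sqrt (2 * Real.pi) * Real.Gamma a))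
      * Real.exp (-y/2) * (Real.cosh y) ^ (-(a + 1/2)) = 1) := by
  have hGa : 0 < Real.Gamma a := Real.Gamma_pos_of_pos ha
  have hGah : 0 < Real.Gamma (a + 1/2) := Real.Gamma_pos_of_pos (by linarith)
  have hs2pi : 0 < Real.sqrt (2 * Real.pi) := Real.sqrt_pos.mpr (by positivity)
  -- the beta integral value
  have hbeta : ∫ t in Set.Ioo (0:ℝ) 1, (t ^ ((a+1)/2 - 1) * (1 - t) ^ (a/2 - 1))
      = Real.Gamma ((a+1)/2) * Real.Gamma (a/2) / Real.Gamma (a + 1/2) := by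
    have hb := real_beta (u := (a+1)/2) (v := a/2) (by linarith) (by linarith)
    rw [show (a+1)/2 + a/2 = a + 1/2 by ring] at hb
    rw [← hb, intervalIntegral.integral_of_le (by norm_num : (0:ℝ) ≤ 1),
      MeasureTheory.integral_Ioc_eq_integral_Ioo]
  have hstep2 := step2 a
  rw [hbeta] at hstep2
  have hK : ∫ u in Set.Ioi (0:ℝ), (u ^ a * (1+u^2) ^ (-(a+1/2)))
      = Real.Gamma ((a+1)/2) * Real.Gamma (a/2) / Real.Gamma (a + 1/2) / 2 := by
    linarith
  -- first conjunct
  have hmain : ∫ y : ℝ, Real.exp (-y/2) * (Real.cosh y) ^ (-(a + 1/2))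
      = Real.sqrt (2 * Real.pi) * Real.Gamma a / Real.Gamma (a + 1/2) := by
    rw [← step1 a]
    have hcong : ∫ u in Set.Ioi (0:ℝ), (u ^ (-(1:ℝ)/2) * ((u + u⁻¹)/2) ^ (-(a+1/2)))
        = ∫ u in Set.Ioi (0:ℝ), 2 ^ (a+1/2) * (u ^ a * (1+u^2) ^ (-(a+1/2))) := by
      apply MeasureTheory.setIntegral_congr_fun measurableSet_Ioi
      intro u hu
      exact pt1 a u hu
    rw [hcong, MeasureTheory.integral_const_mul, hK]
    -- duplication formula
    have hdup := Real.Gamma_mul_Gamma_add_half (a/2)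
    rw [show a/2 + 1/2 = (a+1)/2 by ring, show 2 * (a/2) = a by ring] at hdup
    rw [mul_comm (Real.Gamma ((a+1)/2)) (Real.Gamma (a/2)), hdup]
    have h2 : (2:ℝ) ^ (a+1/2) * (Real.Gamma a * (2:ℝ) ^ (1 - 2*(a/2)) * Real.sqrt Real.pi
        / Real.Gamma (a + 1/2) / 2)
        = Real.sqrt (2 * Real.pi) * Real.Gamma a / Real.Gamma (a + 1/2) := by
      rw [Real.sqrt_mul (by norm_num : (0:ℝ) ≤ 2)]
      have h2a : (2:ℝ) ^ (a+1/2) * (2:ℝ) ^ (1 - 2*(a/2)) / 2 = Real.sqrt 2 := by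
        rw [div_eq_mul_inv, show ((2:ℝ))⁻¹ = (2:ℝ) ^ (-1:ℝ) by rw [Real.rpow_neg_one],
          ← Real.rpow_add (by norm_num : (0:ℝ) < 2),
          ← Real.rpow_add (by norm_num : (0:ℝ) < 2),
          show a + 1/2 + (1 - 2*(a/2)) + (-1:ℝ) = 1/2 by ring, Real.sqrt_eq_rpow]
      calc (2:ℝ) ^ (a+1/2) * (Real.Gamma a * (2:ℝ) ^ (1 - 2*(a/2)) * Real.sqrt Real.pi
            / Real.Gamma (a + 1/2) / 2)
          = ((2:ℝ) ^ (a+1/2) * (2:ℝ) ^ (1 - 2*(a/2)) / 2)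
            * (Real.Gamma a * Real.sqrt Real.pi / Real.Gamma (a + 1/2)) := by ring
        _ = Real.sqrt 2 * (Real.Gamma a * Real.sqrt Real.pi / Real.Gamma (a + 1/2)) := by
            rw [h2a]
        _ = Real.sqrt 2 * Real.sqrt Real.pi * Real.Gamma a / Real.Gamma (a + 1/2) := by ring
    rw [← h2]
    ring
  refine ⟨hmain, ?_⟩
  have : ∀ y : ℝ, (Real.Gamma (a + 1/2) / (Real.sqrt (2 * Real.pi) * Real.Gamma a))
      * Real.exp (-y/2) * (Real.cosh y) ^ (-(a + 1/2))
      = (Real.Gamma (a + 1/2) / (Real.sqrt (2 * Real.pi) * Real.Gamma a))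
      * (Real.exp (-y/2) * (Real.cosh y) ^ (-(a + 1/2))) := fun y => by ring
  simp_rw [this]
  rw [MeasureTheory.integral_const_mul, hmain]
  field_simp
end

section
/- Let Y have density p(y) = (Γ(a+1/2)/(√(2π)·Γ(a)))·e^{-y/2}·(cosh y)^{-(a+1/2)} on ℝ, with a > 0. Then for every λ with 0 < λ < a, E[e^{λ|Y|}] ≤ 2^{a+2}·a/(a − λ). -/
open Real MeasureTheory Set

lemma my_gamma_half_le (a : ℝ) (ha : 0 < a) :
    Real.Gamma (a + 1/2) ≤ 2 * Real.sqrt π * Real.Gamma (a + 1) := by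
  have hπ := Real.pi_pos
  have hsπ : (0:ℝ) < Real.sqrt π := Real.sqrt_pos.mpr hπ
  have hsπ2 : Real.sqrt π ^ 2 = π := Real.sq_sqrt hπ.le
  have hπ3 : (3:ℝ) < π := Real.pi_gt_three
  have hΓa := Real.Gamma_pos_of_pos ha
  have hΓa1 := Real.Gamma_pos_of_pos (by linarith : (0:ℝ) < a + 1)
  rcases le_or_gt (1/2 : ℝ) a with hcase | hcase
  · -- log-convexity: Γ(a+1/2) ≤ √(Γ a) * √(Γ (a+1)) = √a * Γ a
    have h2 := Real.convexOn_log_Gamma.2 (mem_Ioi.mpr ha)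
      (mem_Ioi.mpr (by linarith : (0:ℝ) < a + 1))
      (by norm_num : (0:ℝ) ≤ 1/2) (by norm_num : (0:ℝ) ≤ 1/2) (by norm_num)
    have hpt : (1/2 : ℝ) • a + (1/2 : ℝ) • (a + 1) = a + 1/2 := by
      simp only [smul_eq_mul]; ring
    rw [hpt] at h2
    simp only [Function.comp_apply, smul_eq_mul] at h2
    have h3 : Real.Gamma (a + 1/2) ≤
        Real.exp (1/2 * Real.log (Real.Gamma a) + 1/2 * Real.log (Real.Gamma (a+1))) := by
      have := Real.exp_le_exp.mpr h2
      rwa [Real.exp_log (Real.Gamma_pos_of_pos (by linarith : (0:ℝ) < a + 1/2))] at this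
    have h4 : Real.exp (1/2 * Real.log (Real.Gamma a) + 1/2 * Real.log (Real.Gamma (a+1)))
        = Real.sqrt (Real.Gamma a) * Real.sqrt (Real.Gamma (a+1)) := by
      rw [Real.exp_add]
      congr 1 <;> rw [Real.sqrt_eq_rpow, Real.rpow_def_of_pos (by assumption), mul_comm]
    rw [h4] at h3
    have h5 : Real.sqrt (Real.Gamma a) * Real.sqrt (Real.Gamma (a+1))
        ≤ 2 * Real.sqrt π * Real.Gamma (a + 1) := by
      have hG1 : Real.Gamma (a+1) = a * Real.Gamma a := Real.Gamma_add_one ha.ne'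
      have hsa : (0:ℝ) < Real.sqrt a := Real.sqrt_pos.mpr ha
      have hsG : Real.sqrt (Real.Gamma a) ^ 2 = Real.Gamma a := Real.sq_sqrt hΓa.le
      have hq : Real.sqrt (Real.Gamma (a+1)) = Real.sqrt a * Real.sqrt (Real.Gamma a) := by
        rw [hG1, Real.sqrt_mul ha.le]
      rw [hq, hG1]
      -- goal: √Γa * (√a * √Γa) ≤ 2√π * (a * Γa), i.e. √a * Γa ≤ 2√π a Γa
      have hsa2 : Real.sqrt a ^ 2 = a := Real.sq_sqrt ha.le
      have h12 : (1:ℝ)/2 ≤ Real.sqrt a ^ 2 := by rw [hsa2]; exact hcase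
      have hsπ1 : (1:ℝ) ≤ Real.sqrt π := by nlinarith
      nlinarith [sq_nonneg (Real.sqrt a - 1), mul_pos hsa hΓa,
        mul_pos hsπ (mul_pos hsa hΓa)]
    linarith
  · -- small a : Γ(a+1/2) ≤ √π and Γ(a+1) ≥ √π - 1
    have hΓ12 : Real.Gamma (1/2) = Real.sqrt π := Real.Gamma_one_half_eq
    have hΓ32 : Real.Gamma (3/2) = Real.sqrt π / 2 := by
      have : (3/2 : ℝ) = 1/2 + 1 := by norm_num
      rw [this, Real.Gamma_add_one (by norm_num : (1/2:ℝ) ≠ 0), hΓ12]; ring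
    have hΓ2 : Real.Gamma 2 = 1 := Real.Gamma_two
    have hupper : Real.Gamma (a + 1/2) ≤ Real.sqrt π := by
      have h2 := Real.convexOn_Gamma.2 (mem_Ioi.mpr (by norm_num : (0:ℝ) < 1/2))
        (mem_Ioi.mpr (by norm_num : (0:ℝ) < 1))
        (by linarith : (0:ℝ) ≤ 1 - 2*a) (by linarith : (0:ℝ) ≤ 2*a) (by ring)
      have hpt : (1 - 2*a) • (1/2 : ℝ) + (2*a) • (1:ℝ) = a + 1/2 := by
        simp only [smul_eq_mul]; ring
      rw [hpt] at h2
      simp only [smul_eq_mul, hΓ12, Real.Gamma_one, mul_one] at h2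
      have hsπ1 : (1:ℝ) ≤ Real.sqrt π := by nlinarith
      nlinarith
    have hlower : Real.sqrt π - 1 ≤ Real.Gamma (a + 1) := by
      have hs := Real.convexOn_Gamma.slope_mono_adjacent
        (mem_Ioi.mpr (by linarith : (0:ℝ) < a + 1)) (mem_Ioi.mpr (by norm_num : (0:ℝ) < 2))
        (by linarith : a + 1 < 3/2) (by norm_num : (3/2:ℝ) < 2)
      rw [hΓ32, hΓ2] at hs
      -- hs : (√π/2 - Γ(a+1)) / (3/2 - (a+1)) ≤ (1 - √π/2) / (2 - 3/2)
      have hd : (0:ℝ) < 3/2 - (a+1) := by linarith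
      rw [div_le_div_iff₀ hd (by norm_num : (0:ℝ) < 2 - 3/2)] at hs
      have hπ4 : π < 3.15 := Real.pi_lt_d2
      have h1 : (0:ℝ) ≤ 1 - Real.sqrt π / 2 := by nlinarith
      have h2 : (1 - Real.sqrt π / 2) * (3/2 - (a+1)) ≤ (1 - Real.sqrt π / 2) * (1/2) :=
        mul_le_mul_of_nonneg_left (by linarith) h1
      linarith
    -- conclude: √π ≤ 2√π(√π - 1) needs 3√π ≤ 2π i.e. 9 ≤ 4π
    have key : Real.sqrt π ≤ 2 * Real.sqrt π * (Real.sqrt π - 1) := by nlinarith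
    calc Real.Gamma (a + 1/2) ≤ Real.sqrt π := hupper
      _ ≤ 2 * Real.sqrt π * (Real.sqrt π - 1) := key
      _ ≤ 2 * Real.sqrt π * Real.Gamma (a + 1) := by nlinarith

lemma my_integrable_exp_neg_mul_abs {b : ℝ} (hb : 0 < b) :
    Integrable (fun y : ℝ => Real.exp (-(b * |y|))) := by
  have h1 : IntegrableOn (fun y : ℝ => Real.exp (-(b * |y|))) (Ioi 0) := by
    refine (exp_neg_integrableOn_Ioi 0 hb).congr_fun (fun y hy => ?_) measurableSet_Ioi
    rw [abs_of_pos hy]; ring_nf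
  have h2 : IntegrableOn (fun y : ℝ => Real.exp (-(b * |y|))) (Iic 0) := by
    rw [← Measure.map_neg_eq_self (volume : Measure ℝ)]
    have m : MeasurableEmbedding fun x : ℝ => -x := (Homeomorph.neg ℝ).measurableEmbedding
    rw [m.integrableOn_map_iff]
    simp only [Function.comp_def, abs_neg, neg_preimage, neg_Iic, neg_zero]
    exact Iff.mpr integrableOn_Ici_iff_integrableOn_Ioi h1
  have h := h2.union h1
  rwa [Iic_union_Ioi, integrableOn_univ] at h

lemma my_integral_exp_neg_mul_abs {b : ℝ} (hb : 0 < b) :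
    ∫ y : ℝ, Real.exp (-(b * |y|)) = 2 / b := by
  have h0 : ∫ y : ℝ, Real.exp (-(b * |y|)) = 2 * ∫ x in Ioi (0:ℝ), Real.exp (-(b * x)) :=
    integral_comp_abs (f := fun x => Real.exp (-(b * x)))
  rw [h0]
  have h1 : ∫ x in Ioi (0:ℝ), Real.exp (-(b * x))
      = b⁻¹ • ∫ x in Ioi (b * 0), Real.exp (-x) :=
    integral_comp_mul_left_Ioi (fun x => Real.exp (-x)) 0 hb
  rw [h1, mul_zero, integral_exp_neg_Ioi_zero, smul_eq_mul, mul_one]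
  ring

theorem stmt_9 (a l : ℝ) (ha : 0 < a) (hl0 : 0 < l) (hla : l < a) :
    ∫ y : ℝ, Real.exp (l * |y|) *
      ((Real.Gamma (a + 1/2) / (Real.sqrt (2 * Real.pi) * Real.Gamma a))
        * Real.exp (-y/2) * (Real.cosh y) ^ (-(a + 1/2)))
      ≤ (2:ℝ) ^ (a + 2) * a / (a - l) := by
  have hπ := Real.pi_pos
  set C : ℝ := Real.Gamma (a + 1/2) / (Real.sqrt (2 * Real.pi) * Real.Gamma a) with hCdef
  have hΓa := Real.Gamma_pos_of_pos ha
  have hΓh := Real.Gamma_pos_of_pos (by linarith : (0:ℝ) < a + 1/2)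
  have hsq : (0:ℝ) < Real.sqrt (2*π) := Real.sqrt_pos.mpr (by positivity)
  have hC0 : 0 ≤ C := by
    rw [hCdef]; positivity
  have hC : C ≤ Real.sqrt 2 * a := by
    have h1 : Real.Gamma (a+1/2) ≤ 2 * Real.sqrt π * (a * Real.Gamma a) := by
      have h := my_gamma_half_le a ha
      rwa [Real.Gamma_add_one ha.ne'] at h
    rw [hCdef, div_le_iff₀ (by positivity)]
    have hmul : Real.sqrt 2 * Real.sqrt (2*π) = 2 * Real.sqrt π := by
      rw [← Real.sqrt_mul (by norm_num : (0:ℝ) ≤ 2), show (2:ℝ)*(2*π) = 2^2*π by ring,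
        Real.sqrt_mul (by positivity) π, Real.sqrt_sq (by norm_num : (0:ℝ) ≤ 2)]
    calc Real.Gamma (a+1/2) ≤ 2 * Real.sqrt π * (a * Real.Gamma a) := h1
      _ = Real.sqrt 2 * a * (Real.sqrt (2*π) * Real.Gamma a) := by
          rw [← hmul]; ring
  set b : ℝ := a - l with hbdef
  have hb : 0 < b := by simp [hbdef]; linarith
  have hK : (0:ℝ) < (2:ℝ) ^ (a + 1/2 : ℝ) := Real.rpow_pos_of_pos (by norm_num) _
  -- pointwise bound
  have hpt : ∀ y : ℝ, Real.exp (l * |y|) * (C * Real.exp (-y/2) * Real.cosh y ^ (-(a + 1/2)))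
      ≤ C * (2:ℝ) ^ (a + 1/2 : ℝ) * Real.exp (-(b * |y|)) := by
    intro y
    have hcoshpos := Real.cosh_pos y
    have habs : Real.exp |y| / 2 ≤ Real.cosh y := by
      rw [Real.cosh_eq]
      rcases abs_cases y with ⟨h, _⟩ | ⟨h, _⟩ <;> rw [h] <;>
        nlinarith [Real.exp_pos y, Real.exp_pos (-y)]
    have hrp : Real.cosh y ^ (-(a + 1/2)) ≤ (Real.exp |y| / 2) ^ (-(a + 1/2)) :=
      Real.rpow_le_rpow_of_nonpos (by positivity) habs (by linarith)
    have heq : (Real.exp |y| / 2) ^ (-(a + 1/2)) =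
        (2:ℝ) ^ (a + 1/2 : ℝ) * Real.exp (-(a + 1/2) * |y|) := by
      rw [Real.div_rpow (Real.exp_pos _).le (by norm_num : (0:ℝ) ≤ 2),
        ← Real.exp_mul, Real.rpow_neg (by norm_num : (0:ℝ) ≤ 2),
        div_eq_mul_inv, inv_inv, mul_comm |y| _]
      ring
    have hexp : Real.exp (-y/2) ≤ Real.exp (|y|/2) := by
      apply Real.exp_le_exp.mpr
      have := neg_abs_le y
      linarith [neg_abs_le y, le_abs_self y]
    have hchain : Real.exp (l * |y|) * (C * Real.exp (-y/2) * Real.cosh y ^ (-(a + 1/2)))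
        ≤ Real.exp (l * |y|) * (C * Real.exp (|y|/2) *
            ((2:ℝ) ^ (a + 1/2 : ℝ) * Real.exp (-(a + 1/2) * |y|))) := by
      apply mul_le_mul_of_nonneg_left _ (Real.exp_pos _).le
      have h1 : C * Real.exp (-y/2) * Real.cosh y ^ (-(a + 1/2))
          ≤ C * Real.exp (|y|/2) * Real.cosh y ^ (-(a + 1/2)) := by
        apply mul_le_mul_of_nonneg_right _ (Real.rpow_nonneg hcoshpos.le _)
        exact mul_le_mul_of_nonneg_left hexp hC0
      refine h1.trans ?_
      rw [← heq]
      apply mul_le_mul_of_nonneg_left hrp (by positivity)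
    refine hchain.trans (le_of_eq ?_)
    have hre : ∀ A B D : ℝ, Real.exp A * (C * Real.exp B * ((2:ℝ) ^ (a + 1/2 : ℝ) * Real.exp D))
        = C * (2:ℝ) ^ (a + 1/2 : ℝ) * Real.exp (A + B + D) := by
      intro A B D; rw [Real.exp_add, Real.exp_add]; ring
    rw [hre]
    congr 1
    rw [hbdef]; ring
  -- integrability of the dominating function
  have hgint : Integrable (fun y : ℝ => C * (2:ℝ) ^ (a + 1/2 : ℝ) * Real.exp (-(b * |y|))) :=
    (my_integrable_exp_neg_mul_abs hb).const_mul _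
  have hmono : ∫ y : ℝ, Real.exp (l * |y|) *
      (C * Real.exp (-y/2) * Real.cosh y ^ (-(a + 1/2)))
      ≤ ∫ y : ℝ, C * (2:ℝ) ^ (a + 1/2 : ℝ) * Real.exp (-(b * |y|)) := by
    apply integral_mono_of_nonneg
    · filter_upwards with y
      have := Real.cosh_pos y
      positivity
    · exact hgint
    · filter_upwards with y using hpt y
  have hval : ∫ y : ℝ, C * (2:ℝ) ^ (a + 1/2 : ℝ) * Real.exp (-(b * |y|))
      = C * (2:ℝ) ^ (a + 1/2 : ℝ) * (2 / b) := by
    rw [integral_const_mul, my_integral_exp_neg_mul_abs hb]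
  refine hmono.trans ?_
  rw [hval]
  -- C * 2^(a+1/2) * (2/b) ≤ 2^(a+2) * a / b
  have h2exp : (2:ℝ) ^ (a + 2 : ℝ) = (2:ℝ) ^ (a + 1/2 : ℝ) * (2 * Real.sqrt 2) := by
    rw [show (2:ℝ) * Real.sqrt 2 = (2:ℝ) ^ ((3:ℝ)/2) by
        rw [Real.sqrt_eq_rpow, show ((3:ℝ)/2) = 1 + 1/2 by norm_num,
          Real.rpow_add (by norm_num : (0:ℝ) < 2), Real.rpow_one],
      ← Real.rpow_add (by norm_num : (0:ℝ) < 2)]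
    congr 1
    ring
  have hkey : C * (2:ℝ) ^ (a + 1/2 : ℝ) * 2 ≤ (2:ℝ) ^ (a + 2 : ℝ) * a := by
    have hm := mul_le_mul_of_nonneg_right hC
      (le_of_lt (by positivity : (0:ℝ) < (2:ℝ) ^ (a + 1/2 : ℝ) * 2))
    calc C * (2:ℝ) ^ (a + 1/2 : ℝ) * 2 = C * ((2:ℝ) ^ (a + 1/2 : ℝ) * 2) := by ring
      _ ≤ Real.sqrt 2 * a * ((2:ℝ) ^ (a + 1/2 : ℝ) * 2) := hm
      _ = (2:ℝ) ^ (a + 1/2 : ℝ) * (2 * Real.sqrt 2) * a := by ring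
      _ = (2:ℝ) ^ (a + 2 : ℝ) * a := by rw [← h2exp]
  calc C * (2:ℝ) ^ (a + 1/2 : ℝ) * (2 / b) = (C * (2:ℝ) ^ (a + 1/2 : ℝ) * 2) / b := by ring
    _ ≤ (2:ℝ) ^ (a + 2 : ℝ) * a / b := by gcongr
end
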